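/- Let m₋*, m₊* ∈ ℝ^d, let Σ₀ be a positive semidefinite covariance matrix, and let α ∈ (0, 1]. Define D* = ‖m₋* − m₊*‖₂² and the half-space E₋ = { m ∈ ℝ^d : ⟨m − m₋*, m₊* − m₋*⟩ ≤ ((1−α)/2) · D* }. Then for every m ∈ E₋: E_{m' ~ N(m₋*, Σ₀)}[ ‖m − m'‖₂² ] + α · D* ≤ E_{m' ~ N(m₊*, Σ₀)}[ ‖m − m'‖₂² ]. In particular, on the problem of classifying Gaussian distributions N(m_i, Σ) whose means m_i are drawn from N(m₋*, Σ₀) for class −1 and from N(m₊*, Σ₀) for class +1, the margin condition of an (ε, γ)-good dissimilarity with γ = α D* and unit weighting holds for the squared 2-Wasserstein distance whenever the mean of the test distribution lies in the half-space of its class. -/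

import Mathlib

open MeasureTheory ProbabilityTheory Matrix

/-- The standard Gaussian measure `N(0, I)` on `ℝ^d` (represented as `Fin d → ℝ`). -/
noncomputable def stdGaussian (d : ℕ) : MeasureTheory.Measure (Fin d → ℝ) :=
  MeasureTheory.Measure.pi fun _ => ProbabilityTheory.gaussianReal 0 1

open Classical in
/-- The Gaussian measure `N(m, S)` on `ℝ^d` with mean vector `m` and positive semidefinite
covariance matrix `S`, obtained as the law of `m + S^{1/2} x` for `x ~ N(0, I)`.
(Junk value `0` if `S` is not positive semidefinite.) -/
noncomputable def gaussian {d : ℕ} (m : Fin d → ℝ) (S : Matrix (Fin d) (Fin d) ℝ) :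
    MeasureTheory.Measure (Fin d → ℝ) :=
  if h : S.PosSemidef then (stdGaussian d).map (fun x => m +
    ((h.1.eigenvectorUnitary : Matrix (Fin d) (Fin d) ℝ) * diagonal (Real.sqrt ∘ h.1.eigenvalues) *
      (star (h.1.eigenvectorUnitary : Matrix (Fin d) (Fin d) ℝ))).mulVec x) else 0

open Real in
lemma aux_sq_exp : Integrable (fun x : ℝ => x ^ 2 * rexp (-(1/2) * x ^ 2)) := by
  have h := (integrable_exp_neg_mul_sq (show (0:ℝ) < 1/4 by norm_num)).const_mul 4
  refine h.mono' (by apply Measurable.aestronglyMeasurable; fun_prop) ?_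
  filter_upwards with x
  have h1 : x ^ 2 ≤ 4 * rexp (x ^ 2 / 4) := by
    nlinarith [Real.add_one_le_exp (x ^ 2 / 4)]
  have h2 : rexp (-(1/2) * x ^ 2) * rexp (x ^ 2 / 4) = rexp (-(1/4) * x ^ 2) := by
    rw [← Real.exp_add]; ring_nf
  have h3 : (0:ℝ) < rexp (-(1/2) * x ^ 2) := Real.exp_pos _
  have h4 : (0:ℝ) < rexp (x ^ 2 / 4) := Real.exp_pos _
  rw [Real.norm_eq_abs, abs_of_nonneg (by positivity)]
  nlinarith

open Real in
lemma aux_pdf_toReal (x : ℝ) :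
    (gaussianPDF 0 1 x).toReal = (√(2 * π))⁻¹ * rexp (-(1/2) * x ^ 2) := by
  rw [gaussianPDF, ENNReal.toReal_ofReal (gaussianPDFReal_nonneg _ _ _), gaussianPDFReal]
  norm_num
  left
  ring_nf

open Real in
lemma aux_int_gauss {g : ℝ → ℝ} (hg : Measurable g)
    (h : Integrable (fun x => g x * rexp (-(1/2) * x ^ 2))) :
    Integrable g (gaussianReal 0 1) := by
  rw [gaussianReal_of_var_ne_zero 0 one_ne_zero,
    integrable_withDensity_iff (measurable_gaussianPDF 0 1)
      (ae_of_all _ fun x => ENNReal.ofReal_lt_top)]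
  simp_rw [aux_pdf_toReal]
  have : (fun x => g x * ((√(2 * π))⁻¹ * rexp (-(1/2) * x ^ 2)))
      = fun x => (√(2 * π))⁻¹ * (g x * rexp (-(1/2) * x ^ 2)) := by funext x; ring
  rw [this]
  exact h.const_mul _

lemma aux_int_sq : Integrable (fun x : ℝ => x ^ 2) (gaussianReal 0 1) :=
  aux_int_gauss (by fun_prop) aux_sq_exp

lemma aux_int_id : Integrable (fun x : ℝ => x) (gaussianReal 0 1) := by
  refine aux_int_gauss (by fun_prop) ?_
  simpa using integrable_mul_exp_neg_mul_sq (show (0:ℝ) < 1/2 by norm_num)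

lemma aux_mean_zero : ∫ x, x ∂(gaussianReal 0 1) = 0 := by
  have hmap : (gaussianReal 0 1).map (fun x => -x) = gaussianReal 0 1 := by
    have := gaussianReal_map_const_mul (μ := 0) (v := 1) (-1)
    simp only [neg_one_mul, mul_zero] at this
    convert this using 2
    refine (NNReal.coe_injective ?_).symm
    simp
  have h1 : ∫ x, x ∂((gaussianReal 0 1).map (fun x => -x)) = ∫ x, -x ∂(gaussianReal 0 1) :=
    integral_map measurable_neg.aemeasurable aestronglyMeasurable_id
  rw [hmap, integral_neg] at h1
  linarith

instance (d : ℕ) : IsProbabilityMeasure (stdGaussian d) := by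
  unfold _root_.stdGaussian; infer_instance

lemma aux_map_eval (d : ℕ) (j : Fin d) :
    (stdGaussian d).map (fun x => x j) = gaussianReal 0 1 := by
  refine Measure.ext fun s hs => ?_
  rw [Measure.map_apply (measurable_pi_apply j) hs]
  have : (fun x : Fin d → ℝ => x j) ⁻¹' s
      = Set.pi Set.univ (Function.update (fun _ : Fin d => (Set.univ : Set ℝ)) j s) :=
    Set.eval_preimage
  rw [this, _root_.stdGaussian, Measure.pi_pi]
  rw [Finset.prod_eq_single j (fun b _ hb => by simp [Function.update_of_ne hb])
    (fun h => absurd (Finset.mem_univ j) h)]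
  simp

lemma aux_coord_integrable (d : ℕ) (j : Fin d) {g : ℝ → ℝ} (hg : Measurable g)
    (h : Integrable g (gaussianReal 0 1)) :
    Integrable (fun x : Fin d → ℝ => g (x j)) (stdGaussian d) := by
  rw [← aux_map_eval d j] at h
  exact (integrable_map_measure hg.aestronglyMeasurable
    (measurable_pi_apply j).aemeasurable).mp h

lemma aux_coord_int (d : ℕ) (j : Fin d) :
    Integrable (fun x : Fin d → ℝ => x j) (stdGaussian d) :=
  aux_coord_integrable d j measurable_id aux_int_id

lemma aux_coord_int_sq (d : ℕ) (j : Fin d) :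
    Integrable (fun x : Fin d → ℝ => (x j) ^ 2) (stdGaussian d) :=
  aux_coord_integrable d j (by fun_prop) aux_int_sq

lemma aux_coord_integral (d : ℕ) (j : Fin d) :
    ∫ x, x j ∂(stdGaussian d) = 0 := by
  have := integral_map (μ := stdGaussian d) (φ := fun x => x j) (f := fun y : ℝ => y)
    (measurable_pi_apply j).aemeasurable aestronglyMeasurable_id
  rw [aux_map_eval d j, aux_mean_zero] at this
  exact this.symm

lemma aux_coord_memL2 (d : ℕ) (j : Fin d) :
    MemLp (fun x : Fin d → ℝ => x j) 2 (stdGaussian d) :=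
  (memLp_two_iff_integrable_sq (measurable_pi_apply j).aestronglyMeasurable).mpr
    (aux_coord_int_sq d j)

lemma aux_prod_int (d : ℕ) (j k : Fin d) :
    Integrable (fun x : Fin d → ℝ => x j * x k) (stdGaussian d) := by
  have h := (aux_coord_memL2 d k).smul (aux_coord_memL2 d j)
    (r := 1) (hpqr := ⟨by simp only [inv_one]; rw [ENNReal.inv_two_add_inv_two]⟩)
  rw [memLp_one_iff_integrable] at h
  exact h

lemma aux_mv (d : ℕ) (A : Matrix (Fin d) (Fin d) ℝ) (x : Fin d → ℝ) (i : Fin d) :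
    A.mulVec x i = ∑ j, A i j * x j := by
  simp [Matrix.mulVec, dotProduct]

lemma aux_mv_int (d : ℕ) (A : Matrix (Fin d) (Fin d) ℝ) (i : Fin d) :
    Integrable (fun x : Fin d → ℝ => A.mulVec x i) (stdGaussian d) := by
  simp_rw [aux_mv]
  exact integrable_finset_sum _ fun j _ => (aux_coord_int d j).const_mul _

lemma aux_mv_integral (d : ℕ) (A : Matrix (Fin d) (Fin d) ℝ) (i : Fin d) :
    ∫ x, A.mulVec x i ∂(stdGaussian d) = 0 := by
  simp_rw [aux_mv]
  rw [integral_finset_sum _ fun j _ => (aux_coord_int d j).const_mul _]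
  simp [integral_const_mul, aux_coord_integral]

lemma aux_mv_sq_int (d : ℕ) (A : Matrix (Fin d) (Fin d) ℝ) (i : Fin d) :
    Integrable (fun x : Fin d → ℝ => (A.mulVec x i) ^ 2) (stdGaussian d) := by
  have : (fun x : Fin d → ℝ => (A.mulVec x i) ^ 2)
      = fun x => ∑ j, ∑ k, (A i j * A i k) * (x j * x k) := by
    funext x
    rw [aux_mv, sq, Finset.sum_mul_sum]
    exact Finset.sum_congr rfl fun j _ => Finset.sum_congr rfl fun k _ => by ring
  rw [this]
  exact integrable_finset_sum _ fun j _ =>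
    integrable_finset_sum _ fun k _ => (aux_prod_int d j k).const_mul _

lemma aux_Q_int (d : ℕ) (A : Matrix (Fin d) (Fin d) ℝ) :
    Integrable (fun x : Fin d → ℝ => ∑ i, (A.mulVec x i) ^ 2) (stdGaussian d) :=
  integrable_finset_sum _ fun i _ => aux_mv_sq_int d A i

lemma aux_key (d : ℕ) (A : Matrix (Fin d) (Fin d) ℝ) (c : Fin d → ℝ) :
    ∫ x, ∑ i, (c i - A.mulVec x i) ^ 2 ∂(stdGaussian d)
      = (∑ i, c i ^ 2) + ∫ x, ∑ i, (A.mulVec x i) ^ 2 ∂(stdGaussian d) := by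
  have hL : Integrable (fun x : Fin d → ℝ => ∑ i, c i * A.mulVec x i) (stdGaussian d) :=
    integrable_finset_sum _ fun i _ => (aux_mv_int d A i).const_mul _
  have hfun : (fun x : Fin d → ℝ => ∑ i, (c i - A.mulVec x i) ^ 2)
      = fun x => ((∑ i, c i ^ 2) - 2 * ∑ i, c i * A.mulVec x i)
          + ∑ i, (A.mulVec x i) ^ 2 := by
    funext x
    rw [Finset.mul_sum, ← Finset.sum_sub_distrib, ← Finset.sum_add_distrib]
    exact Finset.sum_congr rfl fun i _ => by ring
  have h0 : Integrable (fun _ : Fin d → ℝ => ∑ i, c i ^ 2) (stdGaussian d) :=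
    integrable_const _
  have h2 : Integrable (fun x : Fin d → ℝ => 2 * ∑ i, c i * A.mulVec x i) (stdGaussian d) :=
    hL.const_mul 2
  have h1 : Integrable (fun x : Fin d → ℝ =>
      (∑ i, c i ^ 2) - 2 * ∑ i, c i * A.mulVec x i) (stdGaussian d) := h0.sub h2
  rw [hfun, integral_add h1 (aux_Q_int d A), integral_sub h0 h2, integral_const_mul,
    integral_finset_sum _ fun i _ => (aux_mv_int d A i).const_mul _]
  simp [integral_const_mul, aux_mv_integral]

lemma aux_gaussian_integral (d : ℕ) (μ : Fin d → ℝ) (S₀ : Matrix (Fin d) (Fin d) ℝ)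
    (h₀ : S₀.PosSemidef) (m : Fin d → ℝ) :
    ∫ m', ∑ i, (m i - m' i) ^ 2 ∂(gaussian μ S₀)
      = (∑ i, (m i - μ i) ^ 2)
        + ∫ x, ∑ i, (((h₀.1.eigenvectorUnitary : Matrix (Fin d) (Fin d) ℝ) * diagonal (Real.sqrt ∘ h₀.1.eigenvalues) *
      (star (h₀.1.eigenvectorUnitary : Matrix (Fin d) (Fin d) ℝ))).mulVec x i) ^ 2 ∂(stdGaussian d) := by
  rw [gaussian, dif_pos h₀]
  have hφ : Measurable (fun x : Fin d → ℝ => μ + ((h₀.1.eigenvectorUnitary : Matrix (Fin d) (Fin d) ℝ) * diagonal (Real.sqrt ∘ h₀.1.eigenvalues) *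
      (star (h₀.1.eigenvectorUnitary : Matrix (Fin d) (Fin d) ℝ))).mulVec x) := by
    refine measurable_const.add ?_
    refine measurable_pi_lambda _ fun i => ?_
    simp only [aux_mv]
    exact Finset.measurable_sum _ fun j _ => (measurable_pi_apply j).const_mul _
  have hf : Measurable (fun m' : Fin d → ℝ => ∑ i, (m i - m' i) ^ 2) :=
    Finset.measurable_sum _ fun i _ =>
      (measurable_const.sub (measurable_pi_apply i)).pow_const 2
  rw [integral_map hφ.aemeasurable hf.aestronglyMeasurable]
  have : (fun x : Fin d → ℝ => ∑ i, (m i - (μ + ((h₀.1.eigenvectorUnitary : Matrix (Fin d) (Fin d) ℝ) * diagonal (Real.sqrt ∘ h₀.1.eigenvalues) *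
      (star (h₀.1.eigenvectorUnitary : Matrix (Fin d) (Fin d) ℝ))).mulVec x) i) ^ 2)
      = fun x => ∑ i, ((m i - μ i) - ((h₀.1.eigenvectorUnitary : Matrix (Fin d) (Fin d) ℝ) * diagonal (Real.sqrt ∘ h₀.1.eigenvalues) *
      (star (h₀.1.eigenvectorUnitary : Matrix (Fin d) (Fin d) ℝ))).mulVec x i) ^ 2 := by
    funext x
    exact Finset.sum_congr rfl fun i _ => by simp [Pi.add_apply]; ring
  rw [this, aux_key]

/-- let `m₋*, m₊* ∈ ℝ^d`, `Σ₀` positive semidefinite, `α ∈ (0,1]`,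
`D* = ‖m₋* − m₊*‖₂²` and `E₋ = {m : ⟨m − m₋*, m₊* − m₋*⟩ ≤ ((1−α)/2) D*}`. Then for every
`m ∈ E₋`, `E_{m' ~ N(m₋*,Σ₀)}[‖m − m'‖₂²] + α D* ≤ E_{m' ~ N(m₊*,Σ₀)}[‖m − m'‖₂²]`: the
margin condition of an `(ε,γ)`-good dissimilarity with `γ = α D*` and unit weighting
holds (for the squared 2-Wasserstein distance `W₂²(N(m₁,Σ),N(m₂,Σ)) = ‖m₁ − m₂‖₂²`)
whenever the mean of the test distribution lies in the half-space of its class. -/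
theorem stmt9 (d : ℕ) (mneg mpos : Fin d → ℝ) (S₀ : Matrix (Fin d) (Fin d) ℝ)
    (h₀ : S₀.PosSemidef) (α : ℝ) (hα : α ∈ Set.Ioc (0 : ℝ) 1)
    (Dstar : ℝ) (hDstar : Dstar = ∑ i, (mneg i - mpos i) ^ 2)
    (m : Fin d → ℝ)
    (hm : (∑ i, (m i - mneg i) * (mpos i - mneg i)) ≤ ((1 - α) / 2) * Dstar) :
    (∫ m', ∑ i, (m i - m' i) ^ 2 ∂(gaussian mneg S₀)) + α * Dstar
      ≤ ∫ m', ∑ i, (m i - m' i) ^ 2 ∂(gaussian mpos S₀) := by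
  rw [aux_gaussian_integral d mneg S₀ h₀ m, aux_gaussian_integral d mpos S₀ h₀ m]
  have key : ∑ i, (m i - mpos i) ^ 2
      = (∑ i, (m i - mneg i) ^ 2) + (∑ i, (mneg i - mpos i) ^ 2)
        - 2 * ∑ i, (m i - mneg i) * (mpos i - mneg i) := by
    rw [Finset.mul_sum, ← Finset.sum_add_distrib, ← Finset.sum_sub_distrib]
    exact Finset.sum_congr rfl fun i _ => by ring
  have hα1 : 0 < α := hα.1
  nlinarith [hm, key, hDstar]
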